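/- Let σ > 0, let μ, ν ∈ ℝ, and let P be a probability measure on ℝ that is absolutely continuous with respect to Lebesgue measure, has finite second moment ∫ x² dP(x) < ∞, and has mean ∫ x dP(x) = ν. Then, as an identity of extended nonnegative reals, KL(P ‖ N(μ, σ²)) = KL(P ‖ N(ν, σ²)) + (ν − μ)²/(2σ²), where N(m, σ²) is the Gaussian distribution on ℝ with mean m and variance σ² and KL denotes the Kullback–Leibler divergence. -/

import Mathlib

open MeasureTheory ProbabilityTheory
open scoped ENNReal Classical

/-- The Kullback–Leibler divergence of `P` from `Q`, as an extended nonnegative real: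
`∫ log(dP/dQ) dP` if `P ≪ Q` and the log-likelihood ratio is integrable, and `∞`
otherwise. -/
noncomputable def klDiv (P Q : Measure ℝ) : ℝ≥0∞ :=
  if P ≪ Q ∧ Integrable (llr P Q) P then ENNReal.ofReal (∫ x, llr P Q x ∂P) else ⊤

/-- Nonnegativity of the KL divergence integral. -/
lemma aux_integral_llr_nonneg {P Q : Measure ℝ} [IsProbabilityMeasure P]
    [IsProbabilityMeasure Q] (h : P ≪ Q) (hint : Integrable (llr P Q) P) :
    0 ≤ ∫ x, llr P Q x ∂P := by
  have hneg : Integrable (llr Q P) P := (hint.neg.congr (neg_llr h))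
  have h1 : ∫ x, llr Q P x ∂P ≤ ∫ x, ((Q.rnDeriv P x).toReal - 1) ∂P := by
    refine integral_mono_ae hneg (Measure.integrable_toReal_rnDeriv.sub (integrable_const 1)) ?_
    filter_upwards [Measure.rnDeriv_pos' h, Measure.rnDeriv_lt_top Q P] with x hpos hlt
    have h0 : 0 < (Q.rnDeriv P x).toReal := ENNReal.toReal_pos hpos.ne' hlt.ne
    exact (Real.log_le_sub_one_of_pos h0)
  have h2 : ∫ x, ((Q.rnDeriv P x).toReal - 1) ∂P ≤ 0 := by
    rw [integral_sub Measure.integrable_toReal_rnDeriv (integrable_const 1)]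
    have h3 : ∫ x, (Q.rnDeriv P x).toReal ∂P ≤ (Q Set.univ).toReal := by
      rw [← setIntegral_univ]
      exact Measure.setIntegral_toReal_rnDeriv_le (measure_ne_top _ _)
    simp only [integral_const, probReal_univ, smul_eq_mul, one_mul]
    simp only [measure_univ, ENNReal.toReal_one] at h3
    linarith
  have h4 : ∫ x, llr Q P x ∂P = - ∫ x, llr P Q x ∂P := by
    rw [← integral_neg]
    exact (integral_congr_ae (neg_llr h)).symm
  linarith [h1.trans h2, h4.symm.le]

/-- Decomposition of the log-likelihood ratio with respect to a Gaussian via Lebesgue. -/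
lemma aux_llr_gaussian (P : Measure ℝ) [IsProbabilityMeasure P]
    (hac : P ≪ MeasureTheory.volume) (m : ℝ) {v : NNReal} (hv : v ≠ 0) :
    llr P (gaussianReal m v) =ᵐ[P]
      fun x => llr P MeasureTheory.volume x - Real.log (gaussianPDFReal m v x) := by
  have hP : P ≪ gaussianReal m v := hac.trans (gaussianReal_absolutelyContinuous' m hv)
  have hchain := Measure.rnDeriv_mul_rnDeriv (κ := MeasureTheory.volume) hP
  filter_upwards [hac.ae_le hchain, hac.ae_le (rnDeriv_gaussianReal m v),
    Measure.rnDeriv_pos hP, hP.ae_le (Measure.rnDeriv_lt_top P (gaussianReal m v))]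
    with x hx hpdf hpos hlt
  have hpdf_pos : 0 < gaussianPDFReal m v x := gaussianPDFReal_pos m v x hv
  have hx' : P.rnDeriv MeasureTheory.volume x
      = P.rnDeriv (gaussianReal m v) x * ENNReal.ofReal (gaussianPDFReal m v x) := by
    rw [← hx, Pi.mul_apply, hpdf]; rfl
  have hne : (P.rnDeriv (gaussianReal m v) x).toReal ≠ 0 :=
    (ENNReal.toReal_pos hpos.ne' hlt.ne).ne'
  rw [llr, llr, hx', ENNReal.toReal_mul, ENNReal.toReal_ofReal hpdf_pos.le,
    Real.log_mul hne hpdf_pos.ne']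
  ring

theorem stmt_15 (σ μ ν : ℝ) (hσ : 0 < σ) (P : Measure ℝ) [IsProbabilityMeasure P]
    (hac : P ≪ MeasureTheory.volume)
    (hmom : Integrable (fun x => x ^ 2) P)
    (hmean : ∫ x, x ∂P = ν) :
    klDiv P (gaussianReal μ (σ ^ 2).toNNReal) =
      klDiv P (gaussianReal ν (σ ^ 2).toNNReal) +
        ENNReal.ofReal ((ν - μ) ^ 2 / (2 * σ ^ 2)) := by
  have hσ2 : (0:ℝ) < σ ^ 2 := pow_pos hσ 2
  set v : NNReal := (σ ^ 2).toNNReal with hv_def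
  have hv : v ≠ 0 := by
    simp only [hv_def, ne_eq, Real.toNNReal_eq_zero, not_le]
    exact hσ2
  have hvr : (v : ℝ) = σ ^ 2 := Real.coe_toNNReal _ hσ2.le
  have hPμ : P ≪ gaussianReal μ v := hac.trans (gaussianReal_absolutelyContinuous' μ hv)
  have hPν : P ≪ gaussianReal ν v := hac.trans (gaussianReal_absolutelyContinuous' ν hv)
  -- the correction function
  set g : ℝ → ℝ := fun x => ((x - μ) ^ 2 - (x - ν) ^ 2) / (2 * σ ^ 2) with hg_def
  have hg_eq : ∀ x, g x = ((ν - μ) / σ ^ 2) * x + (μ ^ 2 - ν ^ 2) / (2 * σ ^ 2) := by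
    intro x
    rw [hg_def]
    field_simp
    ring
  -- a.e. decomposition
  have hA : llr P (gaussianReal μ v) =ᵐ[P]
      fun x => llr P (gaussianReal ν v) x + g x := by
    filter_upwards [aux_llr_gaussian P hac μ hv, aux_llr_gaussian P hac ν hv] with x h1 h2
    rw [h1, h2]
    have hlog : ∀ m : ℝ, Real.log (gaussianPDFReal m v x)
        = Real.log ((Real.sqrt (2 * Real.pi * v))⁻¹) + (-(x - m) ^ 2 / (2 * v)) := by
      intro m
      rw [gaussianPDFReal]
      rw [Real.log_mul (by positivity) (Real.exp_pos _).ne', Real.log_exp]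
    rw [hlog μ, hlog ν, hg_def]
    simp only [hvr]
    ring
  -- integrability of x and g
  have hid : Integrable (fun x => x) P := by
    refine (hmom.add (integrable_const 1)).mono
      (aestronglyMeasurable_id) (ae_of_all _ fun x => ?_)
    simp only [Real.norm_eq_abs, Pi.add_apply]
    rw [abs_of_nonneg (by positivity : (0:ℝ) ≤ x ^ 2 + 1)]
    nlinarith [sq_nonneg (|x| - 1), sq_abs x, abs_nonneg x]
  have hgInt : Integrable g P := by
    have : Integrable (fun x => ((ν - μ) / σ ^ 2) * x + (μ ^ 2 - ν ^ 2) / (2 * σ ^ 2)) P :=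
      (hid.const_mul _).add (integrable_const _)
    exact this.congr (ae_of_all _ fun x => (hg_eq x).symm)
  have hgI : ∫ x, g x ∂P = (ν - μ) ^ 2 / (2 * σ ^ 2) := by
    rw [integral_congr_ae (ae_of_all _ hg_eq),
      integral_add (hid.const_mul _) (integrable_const _), integral_const_mul, hmean]
    simp only [integral_const, probReal_univ, smul_eq_mul, one_mul]
    field_simp
    ring
  by_cases hint : Integrable (llr P (gaussianReal ν v)) P
  · have hint' : Integrable (llr P (gaussianReal μ v)) P := (hint.add hgInt).congr hA.symm
    rw [klDiv, klDiv, if_pos ⟨hPμ, hint'⟩, if_pos ⟨hPν, hint⟩, integral_congr_ae hA,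
      integral_add hint hgInt, hgI,
      ENNReal.ofReal_add (aux_integral_llr_nonneg hPν hint) (by positivity)]
  · have hint' : ¬ Integrable (llr P (gaussianReal μ v)) P := by
      intro h
      exact hint (((h.sub hgInt).congr (by filter_upwards [hA] with x hx; simp only [Pi.sub_apply]; rw [hx]; ring)))
    rw [klDiv, klDiv, if_neg (fun h => hint' h.2), if_neg (fun h => hint h.2),
      top_add]
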